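/- For any two dyadic rationals z < z' in [0,1] with {z,z'} ≠ {0,1}, the right path z, r(z), r²(z), …, 1 and the left path z', l(z'), l²(z'), …, 0 intersect in a unique point. -/

import Mathlib

/-- A rational is dyadic if it can be written as `k / 2^n`. -/
def IsDyadic (q : ℚ) : Prop := ∃ (k : ℤ) (n : ℕ), q = (k : ℚ) / 2 ^ n

/-- Membership in `Z`, the set of dyadic rationals of `[0,1]`. -/
def InZ (q : ℚ) : Prop := 0 ≤ q ∧ q ≤ 1 ∧ IsDyadic q

/-- The level of a dyadic rational: the least `n` with `q = k / 2^n` for some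
integer `k`.  The endpoints `0` and `1` have level `0`. -/
noncomputable def level (q : ℚ) : ℕ := sInf {n : ℕ | ∃ k : ℤ, q = (k : ℚ) / 2 ^ n}

/-- The left neighbor `l(z) = (k-1)/2^n` of `z = k/2^n` (in lowest terms,
`k` odd, `n ≥ 1`); points of level `0` are fixed. -/
noncomputable def lnb (q : ℚ) : ℚ :=
  if level q = 0 then q else q - (1 / 2 : ℚ) ^ level q

/-- The right neighbor `r(z) = (k+1)/2^n` of `z = k/2^n` (in lowest terms,
`k` odd, `n ≥ 1`); points of level `0` are fixed. -/
noncomputable def rnb (q : ℚ) : ℚ :=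
  if level q = 0 then q else q + (1 / 2 : ℚ) ^ level q

lemma half_pow (n : ℕ) : (1/2:ℚ)^n = 1/2^n := by rw [div_pow, one_pow]

lemma level_le_of_rep {q : ℚ} {m : ℕ} {k : ℤ} (h : q = (k:ℚ)/2^m) : level q ≤ m :=
  Nat.sInf_le ⟨k, h⟩

lemma rep_level {q : ℚ} (hq : IsDyadic q) : ∃ k : ℤ, q = (k:ℚ)/2^(level q) := by
  obtain ⟨k, n, h⟩ := hq
  exact Nat.sInf_mem (⟨n, k, h⟩ : {n : ℕ | ∃ k : ℤ, q = (k : ℚ) / 2 ^ n}.Nonempty)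

lemma rep_of_level_le {q : ℚ} (hq : IsDyadic q) {m : ℕ} (h : level q ≤ m) :
    ∃ k : ℤ, q = (k:ℚ)/2^m := by
  obtain ⟨k, hk⟩ := rep_level hq
  set L := level q with hL
  refine ⟨k * 2^(m - L), ?_⟩
  have h2 : (2:ℚ)^m = 2^L * 2^(m - L) := by
    rw [← pow_add]; congr 1; omega
  rw [hk, h2]
  push_cast
  rw [div_eq_div_iff (by positivity) (by positivity)]
  ring

lemma step_le {a b : ℤ} {m : ℕ} (h : (a:ℚ)/2^m < (b:ℚ)/2^m) :
    (a:ℚ)/2^m + (1/2)^m ≤ (b:ℚ)/2^m := by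
  have h2 : (0:ℚ) < 2^m := by positivity
  rw [div_lt_div_iff_of_pos_right h2] at h
  have hab : a + 1 ≤ b := by exact_mod_cast Int.add_one_le_iff.mpr (by exact_mod_cast h)
  have : ((a:ℚ) + 1)/2^m ≤ (b:ℚ)/2^m := by
    gcongr
    exact_mod_cast hab
  rw [half_pow, add_div] at *
  linarith

lemma rep_neighbor {q : ℚ} (hq : IsDyadic q) {n : ℕ} (h : level q = n + 1) :
    (∃ k : ℤ, q + (1/2)^(n+1) = (k:ℚ)/2^n) ∧ (∃ k : ℤ, q - (1/2)^(n+1) = (k:ℚ)/2^n) := by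
  obtain ⟨k, hk⟩ := rep_level hq
  rw [h] at hk
  have hodd : ¬ (2 ∣ k) := by
    rintro ⟨j, rfl⟩
    have : q = (j:ℚ)/2^n := by
      rw [hk]; push_cast; rw [pow_succ]
      field_simp
    have := level_le_of_rep this
    omega
  obtain ⟨j, hj⟩ : ∃ j : ℤ, k = 2*j + 1 := by
    rcases Int.even_or_odd k with he | ho
    · exact absurd he.two_dvd hodd
    · obtain ⟨j, hj⟩ := ho; exact ⟨j, hj⟩
  constructor
  · refine ⟨j + 1, ?_⟩
    rw [hk, hj, half_pow]; push_cast; rw [pow_succ]; field_simp; ring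
  · refine ⟨j, ?_⟩
    rw [hk, hj, half_pow]; push_cast; rw [pow_succ]; field_simp; ring


lemma level_one : level (1:ℚ) = 0 :=
  Nat.le_zero.mp (level_le_of_rep (k := 1) (m := 0) (by norm_num))

lemma level_zero : level (0:ℚ) = 0 :=
  Nat.le_zero.mp (level_le_of_rep (k := 0) (m := 0) (by norm_num))

lemma rnb_invariant {z w : ℚ} (hw : InZ w) (h1 : z ≤ w)
    (h2 : w - (1/2)^(level w) < z) :
    InZ (rnb w) ∧ z ≤ rnb w ∧ rnb w - (1/2)^(level (rnb w)) < z := by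
  rcases Nat.eq_zero_or_pos (level w) with h0 | hp
  · simp only [rnb, h0, if_true]
    exact ⟨hw, h1, by rw [h0] at h2; exact h2⟩
  · obtain ⟨n, hn⟩ : ∃ n, level w = n + 1 := ⟨level w - 1, by omega⟩
    have hr : rnb w = w + (1/2)^(n+1) := by
      simp only [rnb, hn, if_neg (Nat.succ_ne_zero n)]
    have hstep : (0:ℚ) < (1/2)^(n+1) := by positivity
    obtain ⟨⟨k, hk⟩, -⟩ := rep_neighbor hw.2.2 hn
    have hlev : level (rnb w) ≤ n := by rw [hr, hk]; exact level_le_of_rep rfl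
    have hw1 : w < 1 := by
      rcases lt_or_eq_of_le hw.2.1 with h | h
      · exact h
      · rw [h] at hn; rw [level_one] at hn; omega
    obtain ⟨a, ha⟩ := rep_of_level_le hw.2.2 (le_of_eq hn)
    have hone : (1:ℚ) = ((2^(n+1) : ℤ) : ℚ)/2^(n+1) := by push_cast; field_simp
    have hle1 : rnb w ≤ 1 := by
      rw [hr, ha]
      calc (a:ℚ)/2^(n+1) + (1/2)^(n+1) ≤ ((2^(n+1):ℤ):ℚ)/2^(n+1) :=
            step_le (by rw [← ha, ← hone]; exact hw1)
        _ = 1 := hone.symm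
    have hpos : (0:ℚ) ≤ rnb w := le_trans hw.1 (by rw [hr]; linarith)
    have hdy : IsDyadic (rnb w) := ⟨k, n, by rw [hr, hk]⟩
    refine ⟨⟨hpos, hle1, hdy⟩, le_trans h1 (by rw [hr]; linarith), ?_⟩
    have hmono : (1/2:ℚ)^n ≤ (1/2)^(level (rnb w)) :=
      pow_le_pow_of_le_one (by norm_num) (by norm_num) hlev
    have hps : (1/2:ℚ)^(n+1) + (1/2)^(n+1) = (1/2)^n := by ring
    rw [hn] at h2
    rw [hr] at hmono ⊢
    linarith

lemma lnb_invariant {z' w : ℚ} (hw : InZ w) (h1 : w ≤ z')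
    (h2 : z' < w + (1/2)^(level w)) :
    InZ (lnb w) ∧ lnb w ≤ z' ∧ z' < lnb w + (1/2)^(level (lnb w)) := by
  rcases Nat.eq_zero_or_pos (level w) with h0 | hp
  · simp only [lnb, h0, if_true]
    exact ⟨hw, h1, by rw [h0] at h2; exact h2⟩
  · obtain ⟨n, hn⟩ : ∃ n, level w = n + 1 := ⟨level w - 1, by omega⟩
    have hr : lnb w = w - (1/2)^(n+1) := by
      simp only [lnb, hn, if_neg (Nat.succ_ne_zero n)]
    have hstep : (0:ℚ) < (1/2)^(n+1) := by positivity
    obtain ⟨-, ⟨k, hk⟩⟩ := rep_neighbor hw.2.2 hn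
    have hlev : level (lnb w) ≤ n := by rw [hr, hk]; exact level_le_of_rep rfl
    have hw0 : 0 < w := by
      rcases lt_or_eq_of_le hw.1 with h | h
      · exact h
      · rw [← h] at hn; rw [level_zero] at hn; omega
    obtain ⟨a, ha⟩ := rep_of_level_le hw.2.2 (le_of_eq hn)
    have hzero : (0:ℚ) = ((0:ℤ):ℚ)/2^(n+1) := by norm_num
    have hge0 : 0 ≤ lnb w := by
      rw [hr, ha]
      have := step_le (a := 0) (b := a) (m := n+1) (by rw [← ha, ← hzero]; exact hw0)
      rw [← hzero] at this
      linarith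
    have hle1 : lnb w ≤ 1 := le_trans (by rw [hr]; linarith) hw.2.1
    have hdy : IsDyadic (lnb w) := ⟨k, n, by rw [hr, hk]⟩
    have hwle : lnb w ≤ w := by rw [hr]; linarith
    refine ⟨⟨hge0, hle1, hdy⟩, le_trans hwle h1, ?_⟩
    have hmono : (1/2:ℚ)^n ≤ (1/2)^(level (lnb w)) :=
      pow_le_pow_of_le_one (by norm_num) (by norm_num) hlev
    have hps : (1/2:ℚ)^(n+1) + (1/2)^(n+1) = (1/2)^n := by ring
    rw [hn] at h2
    rw [hr] at hmono ⊢
    linarith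


lemma rnb_iter {z : ℚ} (hz : InZ z) (i : ℕ) :
    InZ (rnb^[i] z) ∧ z ≤ rnb^[i] z ∧ rnb^[i] z - (1/2)^(level (rnb^[i] z)) < z := by
  induction i with
  | zero =>
    refine ⟨hz, le_refl z, ?_⟩
    simp only [Function.iterate_zero, id_eq]
    have : (0:ℚ) < (1/2)^(level z) := by positivity
    linarith
  | succ i ih =>
    rw [Function.iterate_succ_apply']
    exact rnb_invariant ih.1 ih.2.1 ih.2.2

lemma lnb_iter {z' : ℚ} (hz : InZ z') (j : ℕ) :
    InZ (lnb^[j] z') ∧ lnb^[j] z' ≤ z' ∧ z' < lnb^[j] z' + (1/2)^(level (lnb^[j] z')) := by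
  induction j with
  | zero =>
    refine ⟨hz, le_refl z', ?_⟩
    simp only [Function.iterate_zero, id_eq]
    have : (0:ℚ) < (1/2)^(level z') := by positivity
    linarith
  | succ j ih =>
    rw [Function.iterate_succ_apply']
    exact lnb_invariant ih.1 ih.2.1 ih.2.2

lemma right_base {z w : ℚ} (hN : level z = 0) (hz : InZ z) (hw : IsDyadic w)
    (hw1 : w ≤ 1) (h : z < w) (h2 : w - (1/2)^(level w) < z) : False := by
  obtain ⟨k, hk⟩ := rep_of_level_le hz.2.2 (le_of_eq hN)
  simp only [pow_zero] at hk
  have hk0 : (0:ℚ) ≤ k := by rw [div_one] at hk; rw [← hk]; exact hz.1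
  have hk1 : (k:ℚ) < 1 := by rw [div_one] at hk; rw [← hk]; exact lt_of_lt_of_le h hw1
  have hkz : k = 0 := by
    have e1 : (0:ℤ) ≤ k := by exact_mod_cast hk0
    have e2 : (k:ℤ) < 1 := by exact_mod_cast hk1
    omega
  have hz0 : z = 0 := by rw [hk, hkz]; norm_num
  set L := level w with hL
  obtain ⟨a, ha⟩ := rep_level hw
  rw [← hL] at ha
  rw [hz0] at h h2
  have hd : (0:ℚ) < 2^L := by positivity
  rw [ha, half_pow, div_sub_div_same] at h2
  rw [div_lt_iff₀ hd, zero_mul] at h2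
  rw [ha] at h
  rw [lt_div_iff₀ hd, zero_mul] at h
  have e1 : (0:ℤ) < a := by exact_mod_cast h
  have e2 : (a:ℤ) - 1 < 0 := by exact_mod_cast h2
  omega

lemma left_base {z' w : ℚ} (hN : level z' = 0) (hz : InZ z') (hw : IsDyadic w)
    (hw0 : 0 ≤ w) (h : w < z') (h2 : z' < w + (1/2)^(level w)) : False := by
  obtain ⟨k, hk⟩ := rep_of_level_le hz.2.2 (le_of_eq hN)
  simp only [pow_zero] at hk
  have hk0 : (0:ℚ) < k := by rw [div_one] at hk; rw [← hk]; exact lt_of_le_of_lt hw0 h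
  have hk1 : (k:ℚ) ≤ 1 := by rw [div_one] at hk; rw [← hk]; exact hz.2.1
  have hkz : k = 1 := by
    have e1 : (0:ℤ) < k := by exact_mod_cast hk0
    have e2 : (k:ℤ) ≤ 1 := by exact_mod_cast hk1
    omega
  have hz1 : z' = 1 := by rw [hk, hkz]; norm_num
  set L := level w with hL
  obtain ⟨a, ha⟩ := rep_level hw
  rw [← hL] at ha
  rw [hz1] at h h2
  have hd : (0:ℚ) < 2^L := by positivity
  rw [ha, half_pow, ← add_div] at h2
  rw [lt_div_iff₀ hd, one_mul] at h2
  rw [ha, div_lt_one hd] at h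
  have e1 : (a:ℤ) < 2^L := by exact_mod_cast h
  have e2 : ((2:ℤ))^L < a + 1 := by exact_mod_cast h2
  omega

lemma right_reaches : ∀ N : ℕ, ∀ z w : ℚ, level z ≤ N → InZ z → IsDyadic w → w ≤ 1 →
    z ≤ w → w - (1/2)^(level w) < z → ∃ i, w = rnb^[i] z := by
  intro N
  induction N with
  | zero =>
    intro z w hN hz hw hw1 h1 h2
    rcases eq_or_lt_of_le h1 with h | h
    · exact ⟨0, h.symm⟩
    · exact absurd (right_base (Nat.le_zero.mp hN) hz hw hw1 h h2) (not_false)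
  | succ N ih =>
    intro z w hN hz hw hw1 h1 h2
    rcases eq_or_lt_of_le h1 with h | h
    · exact ⟨0, h.symm⟩
    · rcases Nat.eq_zero_or_pos (level z) with h0 | hp
      · exact absurd (right_base h0 hz hw hw1 h h2) (not_false)
      · obtain ⟨n, hn⟩ : ∃ n, level z = n + 1 := ⟨level z - 1, by omega⟩
        have hr : rnb z = z + (1/2)^(n+1) := by
          simp only [rnb, hn, if_neg (Nat.succ_ne_zero n)]
        have hstep' : (0:ℚ) < (1/2)^(n+1) := by positivity
        have hlw : level w ≤ n + 1 := by
          by_contra hc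
          push_neg at hc
          obtain ⟨a, ha⟩ := rep_level hw
          obtain ⟨c, hcrep⟩ := rep_of_level_le hz.2.2 (by omega : level z ≤ level w)
          have := step_le (a := c) (b := a) (m := level w) (by rw [← ha, ← hcrep]; exact h)
          rw [← ha, ← hcrep] at this
          linarith
        obtain ⟨a, ha⟩ := rep_of_level_le hw (by omega : level w ≤ n + 1)
        obtain ⟨c, hcrep⟩ := rep_of_level_le hz.2.2 (le_of_eq hn)
        have hstep : z + (1/2)^(n+1) ≤ w := by
          have := step_le (a := c) (b := a) (m := n+1) (by rw [← ha, ← hcrep]; exact h)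
          rw [← ha, ← hcrep] at this
          exact this
        obtain ⟨⟨k, hk⟩, -⟩ := rep_neighbor hz.2.2 hn
        have hlevr : level (rnb z) ≤ N := by
          rw [hr, hk]
          have := level_le_of_rep (q := (k:ℚ)/2^n) (m := n) (k := k) rfl
          omega
        have hinz : InZ (rnb z) := by
          refine ⟨le_trans hz.1 (by rw [hr]; linarith), le_trans (by rw [hr]; exact hstep) hw1, ⟨k, n, by rw [hr, hk]⟩⟩
        obtain ⟨i, hi⟩ := ih (rnb z) w hlevr hinz hw hw1 (by rw [hr]; exact hstep) (by linarith)
        exact ⟨i + 1, by rw [hi, Function.iterate_succ_apply]⟩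

lemma left_reaches : ∀ N : ℕ, ∀ z' w : ℚ, level z' ≤ N → InZ z' → IsDyadic w → 0 ≤ w →
    w ≤ z' → z' < w + (1/2)^(level w) → ∃ j, w = lnb^[j] z' := by
  intro N
  induction N with
  | zero =>
    intro z' w hN hz hw hw0 h1 h2
    rcases eq_or_lt_of_le h1 with h | h
    · exact ⟨0, h⟩
    · exact absurd (left_base (Nat.le_zero.mp hN) hz hw hw0 h h2) (not_false)
  | succ N ih =>
    intro z' w hN hz hw hw0 h1 h2
    rcases eq_or_lt_of_le h1 with h | h
    · exact ⟨0, h⟩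
    · rcases Nat.eq_zero_or_pos (level z') with h0 | hp
      · exact absurd (left_base h0 hz hw hw0 h h2) (not_false)
      · obtain ⟨n, hn⟩ : ∃ n, level z' = n + 1 := ⟨level z' - 1, by omega⟩
        have hr : lnb z' = z' - (1/2)^(n+1) := by
          simp only [lnb, hn, if_neg (Nat.succ_ne_zero n)]
        have hstep' : (0:ℚ) < (1/2)^(n+1) := by positivity
        have hlw : level w ≤ n + 1 := by
          by_contra hc
          push_neg at hc
          obtain ⟨a, ha⟩ := rep_level hw
          obtain ⟨c, hcrep⟩ := rep_of_level_le hz.2.2 (by omega : level z' ≤ level w)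
          have := step_le (a := a) (b := c) (m := level w) (by rw [← ha, ← hcrep]; exact h)
          rw [← ha, ← hcrep] at this
          linarith
        obtain ⟨a, ha⟩ := rep_of_level_le hw (by omega : level w ≤ n + 1)
        obtain ⟨c, hcrep⟩ := rep_of_level_le hz.2.2 (le_of_eq hn)
        have hstep : w + (1/2)^(n+1) ≤ z' := by
          have := step_le (a := a) (b := c) (m := n+1) (by rw [← ha, ← hcrep]; exact h)
          rw [← ha, ← hcrep] at this
          exact this
        obtain ⟨-, ⟨k, hk⟩⟩ := rep_neighbor hz.2.2 hn
        have hlevr : level (lnb z') ≤ N := by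
          rw [hr, hk]
          have := level_le_of_rep (q := (k:ℚ)/2^n) (m := n) (k := k) rfl
          omega
        have hinz : InZ (lnb z') := by
          refine ⟨le_trans hw0 (by rw [hr]; linarith), le_trans (by rw [hr]; linarith) hz.2.1, ⟨k, n, by rw [hr, hk]⟩⟩
        obtain ⟨j, hj⟩ := ih (lnb z') w hlevr hinz hw hw0 (by rw [hr]; linarith) (by linarith)
        exact ⟨j + 1, by rw [hj, Function.iterate_succ_apply]⟩

lemma meet_not_lt {z z' u v : ℚ} (hu : IsDyadic u) (hv : IsDyadic v)
    (h1 : z ≤ u) (h4 : z' < u + (1/2)^(level u))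
    (h2' : v - (1/2)^(level v) < z) (h3' : v ≤ z') : ¬ u < v := by
  intro hlt
  set M := max (level u) (level v) with hM
  obtain ⟨a, ha⟩ := rep_of_level_le hu (le_max_left _ _)
  obtain ⟨b, hb⟩ := rep_of_level_le hv (le_max_right _ _)
  have hstep : u + (1/2)^M ≤ v := by
    have := step_le (a := a) (b := b) (m := M) (by rw [← ha, ← hb]; exact hlt)
    rw [← ha, ← hb] at this
    exact this
  rcases max_choice (level u) (level v) with h | h
  · rw [← hM] at h; rw [← h] at h4; linarith
  · rw [← hM] at h; rw [← h] at h2'; linarith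


/-- For dyadic rationals `z < z'` in `[0,1]` with `{z,z'} ≠ {0,1}`, the right
path from `z` and the left path from `z'` intersect in a unique point. -/
theorem paths_meet_uniquely (z z' : ℚ) (hz : InZ z) (hz' : InZ z')
    (hlt : z < z') (hne : ¬(z = 0 ∧ z' = 1)) :
    ∃! w : ℚ, (∃ i : ℕ, w = rnb^[i] z) ∧ (∃ j : ℕ, w = lnb^[j] z') := by
  -- T: the set of denominators exponents realizable in [z, z']
  set T : Set ℕ := {m | ∃ w : ℚ, z ≤ w ∧ w ≤ z' ∧ ∃ k : ℤ, w = (k:ℚ)/2^m} with hT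
  have hTne : T.Nonempty := by
    obtain ⟨k, hk⟩ := rep_level hz.2.2
    exact ⟨level z, z, le_refl z, le_of_lt hlt, k, hk⟩
  obtain ⟨w, hwz, hwz', k, hwk⟩ := Nat.sInf_mem hTne
  set m0 := sInf T with hm0
  have hwd : IsDyadic w := ⟨k, m0, hwk⟩
  have hlevw : level w ≤ m0 := level_le_of_rep hwk
  -- the two interval conditions
  have hcond : w - (1/2)^(level w) < z ∧ z' < w + (1/2)^(level w) := by
    rcases Nat.eq_zero_or_pos (level w) with h0 | hp
    · -- w is an integer, 0 or 1
      obtain ⟨c, hc⟩ := rep_of_level_le hwd (le_of_eq h0)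
      simp only [pow_zero, div_one] at hc
      have hw0 : (0:ℚ) ≤ w := le_trans hz.1 hwz
      have hw1 : w ≤ 1 := le_trans hwz' hz'.2.1
      have e1 : (0:ℤ) ≤ c := by exact_mod_cast hc ▸ hw0
      have e2 : (c:ℤ) ≤ 1 := by exact_mod_cast hc ▸ hw1
      rw [h0]
      simp only [pow_zero]
      interval_cases c
      · -- w = 0, so z = 0, z' < 1
        have hwe : w = 0 := by rw [hc]; norm_num
        have hze : z = 0 := le_antisymm (hwe ▸ hwz) hz.1
        have : z' ≠ 1 := fun hc' => hne ⟨hze, hc'⟩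
        have : z' < 1 := lt_of_le_of_ne hz'.2.1 this
        constructor <;> [linarith; linarith]
      · -- w = 1, so z' = 1, z > 0
        have hwe : w = 1 := by rw [hc]; norm_num
        have hze : z' = 1 := le_antisymm hz'.2.1 (hwe ▸ hwz')
        have : z ≠ 0 := fun hc' => hne ⟨hc', hze⟩
        have : 0 < z := lt_of_le_of_ne hz.1 (Ne.symm this)
        constructor <;> [linarith; linarith]
    · obtain ⟨p, hp2⟩ : ∃ p, level w = p + 1 := ⟨level w - 1, by omega⟩
      have hm0p : p + 1 ≤ m0 := hp2 ▸ hlevw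
      obtain ⟨hplus, hminus⟩ := rep_neighbor hwd hp2
      constructor
      · by_contra hcon
        push_neg at hcon
        -- w - (1/2)^(p+1) is in [z,z'] with smaller level
        obtain ⟨k', hk'⟩ := hminus
        have hd : IsDyadic (w - (1/2)^(p+1)) := ⟨k', p, hk'⟩
        have hl : level (w - (1/2)^(p+1)) ≤ p := level_le_of_rep hk'
        obtain ⟨k'', hk''⟩ := rep_of_level_le hd (by omega : level (w - (1/2)^(p+1)) ≤ m0 - 1)
        have hmem : m0 - 1 ∈ T := by
          rw [hp2] at hcon
          have hps : (0:ℚ) < (1/2)^(p+1) := by positivity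
          exact ⟨w - (1/2)^(p+1), hcon, by linarith, k'', hk''⟩
        have := Nat.sInf_le hmem
        omega
      · by_contra hcon
        push_neg at hcon
        obtain ⟨k', hk'⟩ := hplus
        have hd : IsDyadic (w + (1/2)^(p+1)) := ⟨k', p, hk'⟩
        have hl : level (w + (1/2)^(p+1)) ≤ p := level_le_of_rep hk'
        obtain ⟨k'', hk''⟩ := rep_of_level_le hd (by omega : level (w + (1/2)^(p+1)) ≤ m0 - 1)
        have hmem : m0 - 1 ∈ T := by
          rw [hp2] at hcon
          have hps : (0:ℚ) < (1/2)^(p+1) := by positivity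
          exact ⟨w + (1/2)^(p+1), by linarith, hcon, k'', hk''⟩
        have := Nat.sInf_le hmem
        omega
  obtain ⟨hcl, hcr⟩ := hcond
  obtain ⟨i, hi⟩ := right_reaches (level z) z w (le_refl _) hz hwd
    (le_trans hwz' hz'.2.1) hwz hcl
  obtain ⟨j, hj⟩ := left_reaches (level z') z' w (le_refl _) hz' hwd
    (le_trans hz.1 hwz) hwz' hcr
  refine ⟨w, ⟨⟨i, hi⟩, ⟨j, hj⟩⟩, ?_⟩
  rintro v ⟨⟨i', hi'⟩, ⟨j', hj'⟩⟩
  -- v satisfies the same interval conditions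
  have hv1 := rnb_iter hz i'
  have hv2 := lnb_iter hz' j'
  rw [← hi'] at hv1
  rw [← hj'] at hv2
  have hvd : IsDyadic v := hv1.1.2.2
  have h1v : z ≤ v := hv1.2.1
  have h2v : v - (1/2)^(level v) < z := hv1.2.2
  have h3v : v ≤ z' := hv2.2.1
  have h4v : z' < v + (1/2)^(level v) := hv2.2.2
  have hA : ¬ v < w := meet_not_lt hvd hwd h1v h4v hcl hwz'
  have hB : ¬ w < v := meet_not_lt hwd hvd hwz hcr h2v h3v
  rcases lt_trichotomy v w with h | h | h
  · exact absurd h hA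
  · exact h
  · exact absurd h hB
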